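/- Let T be a triangulated category with arbitrary small coproducts, P a compact generator of T, and suppose Λ is N-sparse. Let X, Y be objects of T such that proj dim π_*X ≤ 1, π_*X ∈ B[i] and π_*Y ∈ B[j], where the residues i, j ∈ ℤ/N satisfy j ≢ i (mod N) and j ≢ i+1 (mod N). Then Hom_T(X, Y) = 0. -/

import Mathlib

/-!
Shared setup: a triangulated category `C` with (co)products, a compact generator `P`,
the graded endomorphism ring `Λ = End_T(P)_* = Hom_T(Σ^* P, P)` and its category of
graded right modules, realized concretely.
-/

set_option linter.unusedSectionVars false

open CategoryTheory CategoryTheory.Limits CategoryTheory.Pretriangulated DirectSum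

universe v u

namespace Franke

variable {C : Type u} [Category.{v} C] [Preadditive C] [HasZeroObject C]
  [HasShift C ℤ] [∀ n : ℤ, (shiftFunctor C n).Additive] [Pretriangulated C]

/-- The degree `k` component of the graded endomorphism ring
`Λ = End_T(P)_* = Hom_T(Σ^* P, P)`: its degree `k` part is `Hom(P⟦k⟧, P)`. -/
abbrev lam (P : C) (k : ℤ) : Type v := (P⟦k⟧ ⟶ P)

/-- The right action of a degree `k` element `a : Σᵏ P ⟶ P` of `Λ` on a degree `n`
element `m : Σⁿ P ⟶ X` of the graded hom `π_* X = Hom_T(Σ^* P, X)`; the result is the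
degree `n + k` element `Σ^{n+k} P ≅ (Σᵏ P)⟦n⟧ → Σⁿ P → X`. -/
def gsmulHom (P : C) {X : C} {n k l : ℤ} (h : n + k = l)
    (m : P⟦n⟧ ⟶ X) (a : lam P k) : P⟦l⟧ ⟶ X :=
  (shiftFunctorAdd' C k n l (by omega)).hom.app P ≫ a⟦n⟧' ≫ m

/-- The multiplication of the graded endomorphism ring `Λ = End_T(P)_*`. -/
def gmul (P : C) {j k l : ℤ} (h : j + k = l) (a : lam P j) (b : lam P k) : lam P l :=
  gsmulHom P h a b

/-- The unit `1 ∈ Λ₀ = Hom(Σ⁰P, P)` of the graded endomorphism ring. -/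
def gone (P : C) : lam P 0 := (shiftFunctorZero C ℤ).hom.app P

/-- A ℤ-graded right module over the graded endomorphism ring `Λ = End_T(P)_*`.
The action is indexed by proofs `n + k = l` in order to avoid transport along
equalities of degrees. -/
structure GradedModule (P : C) where
  M : ℤ → Type v
  [acg : ∀ n, AddCommGroup (M n)]
  smul : ∀ {n k l : ℤ}, n + k = l → M n → lam P k → M l
  smul_addₓ : ∀ {n k l : ℤ} (h : n + k = l) (m : M n) (a b : lam P k),
    smul h m (a + b) = smul h m a + smul h m b
  add_smulₓ : ∀ {n k l : ℤ} (h : n + k = l) (m m' : M n) (a : lam P k),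
    smul h (m + m') a = smul h m a + smul h m' a
  smul_oneₓ : ∀ {n : ℤ} (m : M n), smul (add_zero n) m (gone P) = m
  smul_mulₓ : ∀ {n j k nj jk njk : ℤ} (h₁ : n + j = nj) (h₂ : j + k = jk)
    (h₃ : nj + k = njk) (h₄ : n + jk = njk) (m : M n) (a : lam P j) (b : lam P k),
    smul h₃ (smul h₁ m a) b = smul h₄ m (gmul P h₂ a b)

attribute [instance] GradedModule.acg

/-- The action of a fixed `a : Λₖ` as an additive map `Mₙ →+ M_{n+k}`. -/
def GradedModule.smulAddHom {P : C} (M : GradedModule P) {n k l : ℤ} (h : n + k = l)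
    (a : lam P k) : M.M n →+ M.M l :=
  AddMonoidHom.mk' (fun m => M.smul h m a) (fun m m' => M.add_smulₓ h m m' a)

theorem GradedModule.zero_smulₓ {P : C} (M : GradedModule P) {n k l : ℤ} (h : n + k = l)
    (a : lam P k) : M.smul h (0 : M.M n) a = 0 :=
  map_zero (M.smulAddHom h a)

/-- `π_* X = Hom_T(Σ^* P, X)` as a graded right `Λ`-module. -/
@[reducible] def piMod (P X : C) : GradedModule P where
  M n := P⟦n⟧ ⟶ X
  smul h m a := gsmulHom P h m a
  smul_addₓ h m a b := by
    simp [gsmulHom, Functor.map_add, Preadditive.comp_add, Preadditive.add_comp]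
  add_smulₓ h m m' a := by
    simp [gsmulHom, Preadditive.comp_add]
  smul_oneₓ m := by
    simp only [gsmulHom, gone]
    rw [shiftFunctorAdd'_zero_add_hom_app, ← Functor.map_comp_assoc, Iso.inv_hom_id_app]
    simp
  smul_mulₓ {n j k nj jk njk} h₁ h₂ h₃ h₄ m a b := by
    simp only [gsmulHom, gmul, Functor.map_comp, Category.assoc]
    have nat := ((shiftFunctorAdd' C j n nj (by omega)).hom).naturality b
    dsimp at nat
    rw [reassoc_of% nat]
    rw [← shiftFunctorAdd'_assoc_hom_app_assoc k j n jk nj njk (by omega) (by omega)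
      (by omega) P]


/-- A morphism of graded right `Λ`-modules: a degree-preserving `Λ`-linear additive map. -/
structure GHom {P : C} (M N : GradedModule P) where
  app : ∀ n : ℤ, M.M n →+ N.M n
  app_smul : ∀ {n k l : ℤ} (h : n + k = l) (m : M.M n) (a : lam P k),
    app l (M.smul h m a) = N.smul h (app n m) a

@[ext] theorem GHom.ext {P : C} {M N : GradedModule P} {f g : GHom M N}
    (h : ∀ (n : ℤ) (x : M.M n), f.app n x = g.app n x) : f = g := by
  obtain ⟨fa, _⟩ := f; obtain ⟨ga, _⟩ := g
  congr 1
  funext n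
  exact AddMonoidHom.ext (h n)

/-- The identity morphism of graded modules. -/
def GHom.id {P : C} (M : GradedModule P) : GHom M M :=
  ⟨fun _ => AddMonoidHom.id _, fun _ _ _ => rfl⟩

/-- Composition of morphisms of graded modules. -/
def GHom.comp {P : C} {M N K : GradedModule P} (g : GHom N K) (f : GHom M N) : GHom M K :=
  ⟨fun n => (g.app n).comp (f.app n), fun h m a => by
    simp only [AddMonoidHom.comp_apply, f.app_smul, g.app_smul]⟩

instance {P : C} {M N : GradedModule P} : Zero (GHom M N) :=
  ⟨{ app := fun _ => 0
     app_smul := fun h m a => by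
       show (0 : N.M _) = N.smul h (0 : N.M _) a
       exact (N.zero_smulₓ h a).symm }⟩

@[simp] theorem GHom.zero_app {P : C} {M N : GradedModule P} (n : ℤ) (x : M.M n) :
    (0 : GHom M N).app n x = 0 := rfl

/-- An isomorphism of graded right `Λ`-modules. -/
structure GIso {P : C} (M N : GradedModule P) where
  hom : GHom M N
  inv : GHom N M
  hom_inv_id : inv.comp hom = GHom.id M
  inv_hom_id : hom.comp inv = GHom.id N

/-- The shift `M[k]` of a graded module, with `M[k]ₙ = M_{n-k}`. -/
@[reducible] def gshift {P : C} (k : ℤ) (M : GradedModule P) : GradedModule P where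
  M n := M.M (n - k)
  smul h m a := M.smul (by omega) m a
  smul_addₓ h m a b := M.smul_addₓ _ m a b
  add_smulₓ h m m' a := M.add_smulₓ _ m m' a
  smul_oneₓ m := M.smul_oneₓ m
  smul_mulₓ h₁ h₂ h₃ h₄ m a b := M.smul_mulₓ _ h₂ _ _ m a b

/-- Surjectivity (in each degree) of a morphism of graded modules. -/
def GHom.Surj {P : C} {M N : GradedModule P} (f : GHom M N) : Prop :=
  ∀ n : ℤ, Function.Surjective (f.app n)

/-- A pair of composable morphisms of graded modules `0 → Z → E → B → 0`
forming a short exact sequence. -/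
structure IsShortExact {P : C} {Z E B : GradedModule P} (ι : GHom Z E) (ρ : GHom E B) : Prop where
  mono : ∀ n : ℤ, Function.Injective (ι.app n)
  epi : ∀ n : ℤ, Function.Surjective (ρ.app n)
  exact : ∀ (n : ℤ) (x : E.M n), ρ.app n x = 0 ↔ x ∈ Set.range (ι.app n)

/-- Exactness of `M → N → K` at `N` (including that the composite vanishes). -/
def ExactPair {P : C} {M N K : GradedModule P} (f : GHom M N) (g : GHom N K) : Prop :=
  ∀ (n : ℤ) (x : N.M n), g.app n x = 0 ↔ x ∈ Set.range (f.app n)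

/-- A graded module is projective if every degreewise surjection onto it splits against
any map from it: the usual lifting property. -/
def IsProjective {P : C} (Q : GradedModule P) : Prop :=
  ∀ (A B : GradedModule P) (e : GHom A B), e.Surj →
    ∀ f : GHom Q B, ∃ g : GHom Q A, e.comp g = f

/-- `projDimLE d M` says that the graded module `M` admits a projective resolution of
length at most `d`, i.e. has projective dimension `≤ d`. -/
def projDimLE {P : C} : ℕ → GradedModule P → Prop
  | 0, M => IsProjective M
  | d + 1, M => ∃ (F K : GradedModule P) (ε : GHom F M) (ι : GHom K F),
      IsProjective F ∧ IsShortExact ι ε ∧ projDimLE d K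

/-- `Λ = End_T(P)_*` is `N`-sparse: concentrated in degrees divisible by `N`. -/
def Sparse (P : C) (N : ℕ) : Prop :=
  ∀ k : ℤ, ¬ ((N : ℤ) ∣ k) → ∀ a : lam P k, a = 0

/-- A graded module belongs to `B[i]`: it is concentrated in degrees congruent
to `i` modulo `N`. -/
def InDegrees {P : C} (N : ℕ) (i : ZMod N) (M : GradedModule P) : Prop :=
  ∀ n : ℤ, (n : ZMod N) ≠ i → ∀ x : M.M n, x = 0

/-- The canonical comparison map `⊕ᵢ Hom(P, Xᵢ) → Hom(P, ∐ᵢ Xᵢ)`. -/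
noncomputable def compactComparison [HasCoproducts.{v} C] (P : C) {ι : Type v} (X : ι → C) :
    (⨁ i, (P ⟶ X i)) →+ (P ⟶ ∐ X) := by
  classical
  exact DirectSum.toAddMonoid fun i =>
    AddMonoidHom.mk' (fun f => f ≫ Sigma.ι X i) (fun f g => Preadditive.add_comp _ _ _ _ _ _)

/-- `P` is a compact object: `Hom(P, −)` commutes with small coproducts. -/
def IsCompactObj [HasCoproducts.{v} C] (P : C) : Prop :=
  ∀ (ι : Type v) (X : ι → C), Function.Bijective (compactComparison P X)

/-- `P` is a generator: an object all of whose graded homs from `P` vanish is zero. -/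
def IsGenerator (P : C) : Prop :=
  ∀ X : C, (∀ (n : ℤ) (f : P⟦n⟧ ⟶ X), f = 0) → IsZero X

/-- The morphism of graded modules `π_* f : π_* X → π_* Y` induced by `f : X ⟶ Y`. -/
def piGHom (P : C) {X Y : C} (f : X ⟶ Y) : GHom (piMod P X) (piMod P Y) where
  app n := AddMonoidHom.mk' (fun u => u ≫ f) fun u v => Preadditive.add_comp _ _ _ _ _ _
  app_smul h m a := by
    show (gsmulHom P h m a) ≫ f = gsmulHom P h (m ≫ f) a
    simp [gsmulHom]

/-- An extension of `B` by `Z` in the category of graded right `Λ`-modules: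
  a short exact sequence `0 → Z → E → B → 0`. -/
structure GExtension {P : C} (B Z : GradedModule P) where
  E : GradedModule P
  ι : GHom Z E
  ρ : GHom E B
  shortExact : IsShortExact ι ρ

/-- Two extensions are identified if there is a morphism of extensions between them
(such a morphism is automatically an isomorphism). -/
def GExtension.Rel {P : C} {B Z : GradedModule P} (e e' : GExtension B Z) : Prop :=
  ∃ φ : GHom e.E e'.E, φ.comp e.ι = e'.ι ∧ e'.ρ.comp φ = e.ρ

/-- `Ext¹_Λ(B, Z)`, realized as the set of equivalence classes of extensions
`0 → Z → E → B → 0` of graded right `Λ`-modules. -/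
def Ext1 {P : C} (B Z : GradedModule P) : Type _ :=
  Quot (GExtension.Rel (B := B) (Z := Z))

/-- Given `δ : Cc ⟶ ΣX`, the induced morphism of graded modules
`π_* Cc → (π_* X)[1]`, using the canonical identification `π_*(ΣX) ≅ (π_*X)[1]`. -/
noncomputable def triangleConnect (P : C) {X Cc : C} (δ : Cc ⟶ X⟦(1:ℤ)⟧) :
    GHom (piMod P Cc) (gshift 1 (piMod P X)) where
  app n := AddMonoidHom.mk' (fun u =>
    (shiftFunctorAdd' C n (-1) (n-1) (by omega)).hom.app P ≫ (u ≫ δ)⟦(-1:ℤ)⟧' ≫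
      (shiftFunctorCompIsoId C (1:ℤ) (-1) (by omega)).hom.app X) (fun u v => by
        simp [Preadditive.add_comp, Preadditive.comp_add, Functor.map_add])
  app_smul {n k l} h m a := by
    simp only [AddMonoidHom.mk'_apply]
    show (shiftFunctorAdd' C l (-1) (l-1) (by omega)).hom.app P ≫
        ((gsmulHom P h m a) ≫ δ)⟦(-1:ℤ)⟧' ≫
          (shiftFunctorCompIsoId C (1:ℤ) (-1) (by omega)).hom.app X =
      gsmulHom P (show (n-1) + k = l - 1 by omega)
        ((shiftFunctorAdd' C n (-1) (n-1) (by omega)).hom.app P ≫ (m ≫ δ)⟦(-1:ℤ)⟧' ≫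
          (shiftFunctorCompIsoId C (1:ℤ) (-1) (by omega)).hom.app X) a
    simp only [gsmulHom, Functor.map_comp, Category.assoc]
    have nat := ((shiftFunctorAdd' C n (-1) (n-1) (by omega : n + -1 = n - 1)).hom).naturality a
    dsimp at nat
    rw [reassoc_of% nat]
    rw [shiftFunctorAdd'_assoc_hom_app_assoc k n (-1) l (n-1) (l-1) (by omega) (by omega)
      (by omega) P]

section ExtGroups

instance {P : C} {M N : GradedModule P} : Add (GHom M N) :=
  ⟨fun f g =>
    { app := fun n => f.app n + g.app n
      app_smul := fun {n k l} h m a => by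
        show f.app l _ + g.app l _ = N.smul h (f.app n m + g.app n m) a
        rw [f.app_smul, g.app_smul, N.add_smulₓ] }⟩

instance {P : C} {M N : GradedModule P} : Neg (GHom M N) :=
  ⟨fun f =>
    { app := fun n => -(f.app n)
      app_smul := fun {n k l} h m a => by
        show -(f.app l _) = N.smul h (-(f.app n m)) a
        rw [f.app_smul]
        exact (map_neg (N.smulAddHom h a) _).symm }⟩

@[simp] theorem GHom.add_app {P : C} {M N : GradedModule P} (f g : GHom M N) (n : ℤ)
    (x : M.M n) : (f + g).app n x = f.app n x + g.app n x := rfl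

@[simp] theorem GHom.neg_app {P : C} {M N : GradedModule P} (f : GHom M N) (n : ℤ)
    (x : M.M n) : (-f).app n x = -(f.app n x) := rfl

instance {P : C} {M N : GradedModule P} : AddCommGroup (GHom M N) where
  add := (· + ·)
  zero := 0
  neg := Neg.neg
  add_assoc f g h := by ext n x; simp [add_assoc]
  zero_add f := by ext n x; simp
  add_zero f := by ext n x; simp
  add_comm f g := by ext n x; simp [add_comm]
  neg_add_cancel f := by ext n x; simp
  nsmul := nsmulRec
  zsmul := zsmulRec

/-- A projective resolution `⋯ → F₂ → F₁ → F₀ → B → 0` of a graded right `Λ`-module. -/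
structure ProjResolution {P : C} (B : GradedModule P) where
  F : ℕ → GradedModule P
  d : ∀ i : ℕ, GHom (F (i + 1)) (F i)
  aug : GHom (F 0) B
  projective : ∀ i, IsProjective (F i)
  aug_surjective : ∀ n : ℤ, Function.Surjective (aug.app n)
  exact_aug : ∀ (n : ℤ) (x : (F 0).M n), aug.app n x = 0 ↔ x ∈ Set.range ((d 0).app n)
  exact_d : ∀ (i : ℕ) (n : ℤ) (x : (F (i + 1)).M n),
    (d i).app n x = 0 ↔ x ∈ Set.range ((d (i + 1)).app n)

/-- The differential of the cochain complex `Hom_Λ(F_•, Z)` obtained by applying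
`Hom_Λ(−, Z)` to a projective resolution `F_•`. -/
def cochainD {P : C} {B : GradedModule P} (R : ProjResolution B) (Z : GradedModule P)
    (i : ℕ) : GHom (R.F i) Z →+ GHom (R.F (i + 1)) Z :=
  AddMonoidHom.mk' (fun f => f.comp (R.d i)) (fun f g => by ext n x; rfl)

/-- `Ext^{j+1}_Λ(B, Z)`, computed as the `(j+1)`-st cohomology
`ker(Hom(F_{j+1}, Z) → Hom(F_{j+2}, Z)) / im(Hom(F_j, Z) → Hom(F_{j+1}, Z))`
of the complex `Hom_Λ(F_•, Z)` for a projective resolution `F_• → B`. -/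
def extGroup {P : C} {B : GradedModule P} (R : ProjResolution B) (Z : GradedModule P)
    (j : ℕ) : Type v :=
  AddMonoidHom.ker (cochainD R Z (j + 1)) ⧸
    (AddMonoidHom.range (cochainD R Z j)).addSubgroupOf
      (AddMonoidHom.ker (cochainD R Z (j + 1)))

noncomputable instance {P : C} {B : GradedModule P} (R : ProjResolution B)
    (Z : GradedModule P) (j : ℕ) : AddCommGroup (extGroup R Z j) := by
  dsimp [extGroup]; infer_instance

end ExtGroups
section DG

/-- A differential graded right module over `Λ = End_T(P)_*`, where `Λ` is regarded as a
DG ring with zero differential: a graded right `Λ`-module together with a square-zero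
`Λ`-linear differential of degree `-1`. -/
structure DGMod (P : C) where
  gm : GradedModule P
  d : ∀ {n m : ℤ}, m + 1 = n → (gm.M n →+ gm.M m)
  d_sq : ∀ {n m j : ℤ} (h : m + 1 = n) (h' : j + 1 = m) (x : gm.M n), d h' (d h x) = 0
  d_smul : ∀ {n m j l l' : ℤ} (h : m + 1 = n) (hl : n + j = l) (hl' : l' + 1 = l)
    (hm : m + j = l') (x : gm.M n) (a : lam P j),
    d hl' (gm.smul hl x a) = gm.smul hm (d h x) a

/-- A morphism of DG `Λ`-modules: a morphism of the underlying graded modules commuting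
with the differentials. -/
structure DGHom {P : C} (M N : DGMod P) where
  g : GHom M.gm N.gm
  comm : ∀ {n m : ℤ} (h : m + 1 = n) (x : M.gm.M n),
    g.app m (M.d h x) = N.d h (g.app n x)

@[ext] theorem DGHom.ext {P : C} {M N : DGMod P} {f f' : DGHom M N}
    (h : ∀ (n : ℤ) (x : M.gm.M n), f.g.app n x = f'.g.app n x) : f = f' := by
  obtain ⟨fg, _⟩ := f; obtain ⟨fg', _⟩ := f'
  congr 1
  exact GHom.ext h

/-- The category of differential graded right `Λ`-modules. -/
instance dgModCategory (P : C) : Category (DGMod P) where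
  Hom M N := DGHom M N
  id M := ⟨GHom.id _, fun _ _ => rfl⟩
  comp f g := ⟨g.g.comp f.g, fun h x => by
    show g.g.app _ (f.g.app _ _) = _
    rw [f.comm, g.comm]
    rfl⟩
  id_comp f := by apply DGHom.ext; intros; rfl
  comp_id f := by apply DGHom.ext; intros; rfl
  assoc f g h := by apply DGHom.ext; intros; rfl

/-- The cycles `ker dₙ` of a DG module in degree `n`. -/
abbrev cycles {P : C} (M : DGMod P) (n : ℤ) : AddSubgroup (M.gm.M n) :=
  AddMonoidHom.ker (M.d (n := n) (m := n - 1) (by omega))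

/-- The boundaries `im d_{n+1}` of a DG module in degree `n`. -/
abbrev boundaries {P : C} (M : DGMod P) (n : ℤ) : AddSubgroup (M.gm.M n) :=
  AddMonoidHom.range (M.d (n := n + 1) (m := n) rfl)

/-- The homology `H_n M = ker dₙ / im d_{n+1}` of a DG module. -/
abbrev dgHomology {P : C} (M : DGMod P) (n : ℤ) : Type v :=
  cycles M n ⧸ (boundaries M n).addSubgroupOf (cycles M n)

/-- The map induced on cycles by a morphism of DG modules. -/
def cyclesMap {P : C} {M N : DGMod P} (f : M ⟶ N) (n : ℤ) : cycles M n →+ cycles N n :=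
  AddMonoidHom.codRestrict ((f.g.app n).comp (cycles M n).subtype) _ (fun x => by
    have hx : M.d (show (n - 1) + 1 = n by omega) x.1 = 0 := x.2
    have : N.d (show (n - 1) + 1 = n by omega) (f.g.app n x.1) = 0 := by
      rw [← f.comm (show (n - 1) + 1 = n by omega), hx, map_zero]
    exact this)

/-- The map induced on homology by a morphism of DG modules. -/
def dgHomologyMap {P : C} {M N : DGMod P} (f : M ⟶ N) (n : ℤ) :
    dgHomology M n →+ dgHomology N n :=
  QuotientAddGroup.map _ _ (cyclesMap f n) (by
    intro x hx
    have hx' : x.1 ∈ boundaries M n := hx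
    obtain ⟨y, hy⟩ := AddMonoidHom.mem_range.mp hx'
    have : (f.g.app n x.1) ∈ boundaries N n := by
      refine AddMonoidHom.mem_range.mpr ⟨f.g.app (n + 1) y, ?_⟩
      rw [← f.comm rfl y, hy]
    exact this)

/-- A quasi-isomorphism of DG modules: a morphism inducing an isomorphism on homology. -/
def quasiIso (P : C) : MorphismProperty (DGMod P) :=
  fun _ _ f => ∀ n : ℤ, Function.Bijective (dgHomologyMap f n)

/-- The derived category `D(Λ)` of the graded endomorphism ring `Λ = End_T(P)_*`
(regarded as a DG ring with zero differential): the localization of the category of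
DG right `Λ`-modules at the quasi-isomorphisms. -/
abbrev DerivedCat (P : C) := (quasiIso P).Localization

end DG


/-! ### Auxiliary module-level lemmas -/

section ModuleAux

variable {P : C}

@[simp] theorem GHom.comp_app {M N K : GradedModule P} (g : GHom N K) (f : GHom M N)
    (n : ℤ) (x : M.M n) : (g.comp f).app n x = g.app n (f.app n x) := rfl

@[simp] theorem GHom.id_app {M : GradedModule P} (n : ℤ) (x : M.M n) :
    (GHom.id M).app n x = x := rfl

/-- Cast along an equality of degrees. -/
def GradedModule.cast (M : GradedModule P) {a b : ℤ} (h : a = b) : M.M a →+ M.M b := by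
  subst h; exact AddMonoidHom.id _

@[simp] theorem GradedModule.cast_rfl (M : GradedModule P) {a : ℤ} (x : M.M a) :
    M.cast rfl x = x := rfl

theorem GradedModule.cast_cast (M : GradedModule P) {a b c : ℤ} (h : a = b) (h' : b = c)
    (x : M.M a) : M.cast h' (M.cast h x) = M.cast (h.trans h') x := by
  subst h h'; rfl

theorem GHom.app_cast {M N : GradedModule P} (f : GHom M N) {a b : ℤ} (h : a = b)
    (x : M.M a) : f.app b (M.cast h x) = N.cast h (f.app a x) := by
  subst h; rfl

theorem GradedModule.cast_smul (M : GradedModule P) {n n' k l l' : ℤ} (hn : n = n')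
    (h : n + k = l) (h' : n' + k = l') (hl : l = l') (m : M.M n) (a : lam P k) :
    M.smul h' (M.cast hn m) a = M.cast hl (M.smul h m a) := by
  subst hn; subst hl; rfl

theorem GHom.comp_assoc {M N K L : GradedModule P} (h : GHom K L) (g : GHom N K)
    (f : GHom M N) : (h.comp g).comp f = h.comp (g.comp f) := rfl

theorem exists_section {B E : GradedModule P} (ρ : GHom E B) (hρ : ρ.Surj)
    (hB : IsProjective B) : ∃ σ : GHom B E, ρ.comp σ = GHom.id B :=
  hB E B ρ hρ (GHom.id B)

theorem exists_retraction {Z E B : GradedModule P} {ι : GHom Z E} {ρ : GHom E B}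
    (hse : IsShortExact ι ρ) {σ : GHom B E} (hσ : ρ.comp σ = GHom.id B) :
    ∃ r : GHom E Z, r.comp ι = GHom.id Z ∧
      ∀ (n : ℤ) (x : E.M n), ι.app n (r.app n x) = x - σ.app n (ρ.app n x) := by
  have key : ∀ (n : ℤ) (x : E.M n), ∃ z : Z.M n,
      ι.app n z = x - σ.app n (ρ.app n x) := by
    intro n x
    have h0 : ρ.app n (x - σ.app n (ρ.app n x)) = 0 := by
      rw [map_sub]
      have : ρ.app n (σ.app n (ρ.app n x)) = ρ.app n x :=
        congrArg (fun g : GHom B B => g.app n (ρ.app n x)) hσ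
      rw [this, sub_self]
    obtain ⟨z, hz⟩ := (hse.exact n _).1 h0
    exact ⟨z, hz⟩
  choose r' hr' using fun n => key n
  have rsmul : ∀ {n k l : ℤ} (h : n + k = l) (x : E.M n) (a : lam P k),
      r' l (E.smul h x a) = Z.smul h (r' n x) a := by
    intro n k l h x a
    apply hse.mono l
    rw [hr', ι.app_smul, hr']
    rw [ρ.app_smul h x a, σ.app_smul]
    have := map_sub (E.smulAddHom h a) x (σ.app n (ρ.app n x))
    simpa [GradedModule.smulAddHom] using this.symm
  have radd : ∀ (n : ℤ) (x y : E.M n), r' n (x + y) = r' n x + r' n y := by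
    intro n x y
    apply hse.mono n
    rw [map_add, hr', hr', hr', map_add, map_add]
    abel
  refine ⟨⟨fun n => AddMonoidHom.mk' (r' n) (radd n), fun h x a => rsmul h x a⟩, ?_, ?_⟩
  · apply GHom.ext
    intro n x
    apply hse.mono n
    show ι.app n (r' n (ι.app n x)) = ι.app n x
    rw [hr']
    have h0 : ρ.app n (ι.app n x) = 0 := (hse.exact n _).2 ⟨x, rfl⟩
    rw [h0, map_zero, sub_zero]
  · exact hr'

theorem isProjective_of_retract {M E : GradedModule P} (ι : GHom M E) (r : GHom E M)
    (h : r.comp ι = GHom.id M) (hE : IsProjective E) : IsProjective M := by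
  intro A B e he f
  obtain ⟨g, hg⟩ := hE A B e he (f.comp r)
  refine ⟨g.comp ι, ?_⟩
  apply GHom.ext
  intro n x
  have := congrArg (fun t : GHom E B => t.app n (ι.app n x)) hg
  simpa using this.trans (congrArg (fun t : GHom M M => f.app n (t.app n x)) h)

theorem isProjective_of_ses {Z E B : GradedModule P} {ι : GHom Z E} {ρ : GHom E B}
    (hse : IsShortExact ι ρ) (hZ : IsProjective Z) (hB : IsProjective B) :
    IsProjective E := by
  obtain ⟨σ, hσ⟩ := exists_section ρ hse.epi hB
  obtain ⟨r, -, hr⟩ := exists_retraction hse hσ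
  intro A B' e he f
  obtain ⟨a, ha⟩ := hZ A B' e he (f.comp ι)
  obtain ⟨b, hb⟩ := hB A B' e he (f.comp σ)
  refine ⟨(a.comp r) + (b.comp ρ), ?_⟩
  apply GHom.ext
  intro n x
  have ha' := congrArg (fun t : GHom Z B' => t.app n (r.app n x)) ha
  have hb' := congrArg (fun t : GHom B B' => t.app n (ρ.app n x)) hb
  dsimp at ha' hb'
  show e.app n (a.app n (r.app n x) + b.app n (ρ.app n x)) = f.app n x
  rw [map_add, ha', hb', ← map_add]
  congr 1
  rw [hr n x]
  abel

/-- Transport projectivity along an isomorphism of graded modules. -/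
theorem isProjective_of_giso {M N : GradedModule P} (e : GIso M N) (hM : IsProjective M) :
    IsProjective N :=
  isProjective_of_retract e.inv e.hom e.inv_hom_id hM

end ModuleAux
section PullbackAux

variable {P : C}

theorem GradedModule.cast_self (M : GradedModule P) {a : ℤ} (h : a = a) (x : M.M a) :
    M.cast h x = x := rfl

theorem gshift_cast (t : ℤ) (M : GradedModule P) {a b : ℤ} (h : a = b) (x : M.M (a - t)) :
    (gshift t M).cast h x = M.cast (by omega) x := by
  subst h; rfl

/-- An isomorphism of graded modules from a degreewise bijective morphism. -/
noncomputable def gisoOfBijective {M N : GradedModule P} (f : GHom M N)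
    (hf : ∀ n, Function.Bijective (f.app n)) : GIso M N where
  hom := f
  inv :=
    { app := fun n => (AddEquiv.ofBijective (f.app n) (hf n)).symm.toAddMonoidHom
      app_smul := by
        intro n k l h m a
        apply (hf l).1
        show f.app l _ = f.app l _
        rw [f.app_smul]
        have key : ∀ (j : ℤ) (y : N.M j),
            f.app j ((AddEquiv.ofBijective (f.app j) (hf j)).symm.toAddMonoidHom y) = y :=
          fun j y => (AddEquiv.ofBijective (f.app j) (hf j)).apply_symm_apply y
        show f.app l ((AddEquiv.ofBijective (f.app l) (hf l)).symm.toAddMonoidHom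
            (N.smul h m a)) =
          N.smul h (f.app n ((AddEquiv.ofBijective (f.app n) (hf n)).symm.toAddMonoidHom m)) a
        rw [key l, key n] }
  hom_inv_id := by
    apply GHom.ext; intro n x
    exact (AddEquiv.ofBijective (f.app n) (hf n)).symm_apply_apply x
  inv_hom_id := by
    apply GHom.ext; intro n x
    exact (AddEquiv.ofBijective (f.app n) (hf n)).apply_symm_apply x

/-- The underlying subgroup of the pullback of two graded module morphisms. -/
def pbSubgroup {M₁ M₂ M₃ : GradedModule P} (α : GHom M₁ M₃) (β : GHom M₂ M₃) (n : ℤ) :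
    AddSubgroup (M₁.M n × M₂.M n) where
  carrier := {p | α.app n p.1 = β.app n p.2}
  add_mem' := by
    intro a b ha hb
    simp only [Set.mem_setOf_eq, Prod.fst_add, Prod.snd_add, map_add] at *
    rw [ha, hb]
  zero_mem' := by simp
  neg_mem' := by
    intro a ha
    simp only [Set.mem_setOf_eq, Prod.fst_neg, Prod.snd_neg, map_neg] at *
    rw [ha]

theorem mem_pbSubgroup {M₁ M₂ M₃ : GradedModule P} (α : GHom M₁ M₃) (β : GHom M₂ M₃)
    {n : ℤ} (p : M₁.M n × M₂.M n) :
    p ∈ pbSubgroup α β n ↔ α.app n p.1 = β.app n p.2 := Iff.rfl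

/-- The pullback of two morphisms of graded modules with the same target. -/
def pullbackMod {M₁ M₂ M₃ : GradedModule P} (α : GHom M₁ M₃) (β : GHom M₂ M₃) :
    GradedModule P where
  M n := ↥(pbSubgroup α β n)
  smul {n k l} h m a := ⟨(M₁.smul h m.1.1 a, M₂.smul h m.1.2 a), by
    rw [mem_pbSubgroup]
    show α.app l (M₁.smul h m.1.1 a) = β.app l (M₂.smul h m.1.2 a)
    rw [α.app_smul, β.app_smul, (mem_pbSubgroup α β m.1).1 m.2]⟩
  smul_addₓ h m a b := by
    apply Subtype.ext
    exact Prod.ext (M₁.smul_addₓ h _ a b) (M₂.smul_addₓ h _ a b)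
  add_smulₓ h m m' a := by
    apply Subtype.ext
    exact Prod.ext (M₁.add_smulₓ h _ _ a) (M₂.add_smulₓ h _ _ a)
  smul_oneₓ m := by
    apply Subtype.ext
    exact Prod.ext (M₁.smul_oneₓ _) (M₂.smul_oneₓ _)
  smul_mulₓ h₁ h₂ h₃ h₄ m a b := by
    apply Subtype.ext
    exact Prod.ext (M₁.smul_mulₓ h₁ h₂ h₃ h₄ _ a b) (M₂.smul_mulₓ h₁ h₂ h₃ h₄ _ a b)

/-- First projection from a pullback of graded modules. -/
def pbFst {M₁ M₂ M₃ : GradedModule P} (α : GHom M₁ M₃) (β : GHom M₂ M₃) :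
    GHom (pullbackMod α β) M₁ where
  app n := AddMonoidHom.mk' (fun p => p.1.1) (fun p q => rfl)
  app_smul h m a := rfl

/-- Second projection from a pullback of graded modules. -/
def pbSnd {M₁ M₂ M₃ : GradedModule P} (α : GHom M₁ M₃) (β : GHom M₂ M₃) :
    GHom (pullbackMod α β) M₂ where
  app n := AddMonoidHom.mk' (fun p => p.1.2) (fun p q => rfl)
  app_smul h m a := rfl

/-- Map into the first factor of a pullback. -/
def pbIntoFst {M₁ M₂ M₃ Z : GradedModule P} (α : GHom M₁ M₃) (β : GHom M₂ M₃)
    (ι : GHom Z M₁) (hcomp : ∀ (n : ℤ) (z : Z.M n), α.app n (ι.app n z) = 0) :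
    GHom Z (pullbackMod α β) where
  app n := AddMonoidHom.codRestrict ((ι.app n).prod 0) (pbSubgroup α β n) (fun z => by
      rw [mem_pbSubgroup]; show α.app n (ι.app n z) = β.app n 0
      rw [hcomp, map_zero])
  app_smul h m a := by
    apply Subtype.ext
    refine Prod.ext (ι.app_smul h m a) ?_
    exact (M₂.zero_smulₓ h a).symm

/-- Map into the second factor of a pullback. -/
def pbIntoSnd {M₁ M₂ M₃ K : GradedModule P} (α : GHom M₁ M₃) (β : GHom M₂ M₃)
    (κ : GHom K M₂) (hcomp : ∀ (n : ℤ) (z : K.M n), β.app n (κ.app n z) = 0) :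
    GHom K (pullbackMod α β) where
  app n := AddMonoidHom.codRestrict ((0 : K.M n →+ M₁.M n).prod (κ.app n))
    (pbSubgroup α β n) (fun z => by
      rw [mem_pbSubgroup]; show α.app n 0 = β.app n (κ.app n z)
      rw [hcomp, map_zero])
  app_smul h m a := by
    apply Subtype.ext
    refine Prod.ext ?_ (κ.app_smul h m a)
    exact (M₁.zero_smulₓ h a).symm

theorem pb_shortExact_snd {M₁ M₂ M₃ Z : GradedModule P} {α : GHom M₁ M₃} (β : GHom M₂ M₃)
    {ι : GHom Z M₁} (hse : IsShortExact ι α) :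
    IsShortExact (pbIntoFst α β ι (fun n z => (hse.exact n _).2 ⟨z, rfl⟩)) (pbSnd α β) := by
  constructor
  · intro n x y hxy
    apply hse.mono n
    exact congrArg (fun p : (pullbackMod α β).M n => p.1.1) hxy
  · intro n y
    obtain ⟨x, hx⟩ := hse.epi n (β.app n y)
    exact ⟨⟨(x, y), hx⟩, rfl⟩
  · intro n p
    constructor
    · intro hp
      have h2 : p.1.2 = 0 := hp
      have h1 : α.app n p.1.1 = 0 := by
        have := (mem_pbSubgroup α β p.1).1 p.2
        rw [this, h2, map_zero]
      obtain ⟨z, hz⟩ := (hse.exact n _).1 h1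
      refine ⟨z, ?_⟩
      apply Subtype.ext
      exact Prod.ext hz h2.symm
    · rintro ⟨z, rfl⟩
      rfl

theorem pb_shortExact_fst {M₁ M₂ M₃ K : GradedModule P} (α : GHom M₁ M₃) {β : GHom M₂ M₃}
    {κ : GHom K M₂} (hse : IsShortExact κ β) :
    IsShortExact (pbIntoSnd α β κ (fun n z => (hse.exact n _).2 ⟨z, rfl⟩)) (pbFst α β) := by
  constructor
  · intro n x y hxy
    apply hse.mono n
    exact congrArg (fun p : (pullbackMod α β).M n => p.1.2) hxy
  · intro n x
    obtain ⟨y, hy⟩ := hse.epi n (α.app n x)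
    exact ⟨⟨(x, y), hy.symm⟩, rfl⟩
  · intro n p
    constructor
    · intro hp
      have h1 : p.1.1 = 0 := hp
      have h2 : β.app n p.1.2 = 0 := by
        have := (mem_pbSubgroup α β p.1).1 p.2
        rw [← this, h1, map_zero]
      obtain ⟨z, hz⟩ := (hse.exact n _).1 h2
      refine ⟨z, ?_⟩
      apply Subtype.ext
      exact Prod.ext h1.symm hz
    · rintro ⟨z, rfl⟩
      rfl

/-- Shifting a morphism of graded modules. -/
def gshiftG (t : ℤ) {M N : GradedModule P} (f : GHom M N) :
    GHom (gshift t M) (gshift t N) where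
  app n := f.app (n - t)
  app_smul h m a := f.app_smul _ m a

theorem gshift_shortExact (t : ℤ) {Z E B : GradedModule P} {ι : GHom Z E} {ρ : GHom E B}
    (hse : IsShortExact ι ρ) : IsShortExact (gshiftG t ι) (gshiftG t ρ) :=
  ⟨fun n => hse.mono (n - t), fun n => hse.epi (n - t), fun n x => hse.exact (n - t) x⟩

theorem gshift_isProjective (t : ℤ) {M : GradedModule P} (hM : IsProjective M) :
    IsProjective (gshift t M) := by
  intro A B e he f
  -- unshift
  let f' : GHom M (gshift (-t) B) :=
    { app := fun n => ((B.cast (show n + t = n - -t by omega)).comp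
        ((f.app (n + t)).comp (M.cast (show n = n + t - t by omega)))
          : M.M n →+ (gshift (-t) B).M n)
      app_smul := by
        intro n k l h m a
        show B.cast _ (f.app (l + t) (M.cast _ (M.smul h m a))) = _
        rw [← M.cast_smul (show n = n + t - t by omega) h
          (show (n + t - t) + k = l + t - t by omega) (show l = l + t - t by omega) m a]
        have hfs := f.app_smul (show (n+t) + k = (l+t) by omega)
          (M.cast (show n = n+t-t by omega) m) a
        rw [show (M.smul (show (n + t - t) + k = l + t - t by omega)
            (M.cast (show n = n+t-t by omega) m) a)
          = ((gshift t M).smul (show (n+t) + k = (l+t) by omega)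
            (M.cast (show n = n+t-t by omega) m) a) from rfl, hfs]
        exact (B.cast_smul (show n + t = n - -t by omega) (show (n+t)+k = l+t by omega)
          (show (n - -t) + k = l - -t by omega) (show l + t = l - -t by omega) _ a).symm }
  obtain ⟨g', hg'⟩ := hM (gshift (-t) A) (gshift (-t) B) (gshiftG (-t) e)
    (fun n => he (n - -t)) f'
  refine ⟨{ app := fun n => (A.cast (show n - t - -t = n by omega)).comp (g'.app (n - t))
            app_smul := by
              intro n k l h m a
              show A.cast _ (g'.app (l - t) ((gshift t M).smul h m a)) = _
              rw [show ((gshift t M).smul h m a)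
                = M.smul (show (n-t) + k = (l-t) by omega) m a from rfl,
                g'.app_smul (show (n-t) + k = (l-t) by omega) m a]
              show A.cast _ (A.smul _ (g'.app (n-t) m) a) = _
              exact (A.cast_smul (show n - t - -t = n by omega)
                (show (n - t - -t) + k = l - t - -t by omega) h
                (show l - t - -t = l by omega) _ a).symm }, ?_⟩
  apply GHom.ext
  intro n x
  show e.app n (A.cast (show n - t - -t = n by omega) (g'.app (n - t) x)) = f.app n x
  rw [e.app_cast (show n - t - -t = n by omega)]
  have hcomp : e.app (n - t - -t) (g'.app (n - t) x) = f'.app (n - t) x :=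
    congrArg (fun u : GHom M (gshift (-t) B) => u.app (n - t) x) hg'
  rw [hcomp]
  show B.cast _ (B.cast _ (f.app (n - t + t) (M.cast _ x))) = f.app n x
  rw [GradedModule.cast_cast]
  rw [← f.app_cast (show n - t + t = n by omega)]
  congr 1
  rw [gshift_cast, GradedModule.cast_cast]
  rfl

end PullbackAux
section ShiftAux

variable (P : C)

/-- Post-composition with an isomorphism, as an additive equivalence of hom groups. -/
@[simps] def postcompEquiv {A B W : C} (e : A ≅ B) : (W ⟶ A) ≃+ (W ⟶ B) where
  toFun x := x ≫ e.hom
  invFun y := y ≫ e.inv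
  left_inv x := by simp
  right_inv y := by simp
  map_add' x y := by simp [Preadditive.add_comp]

/-- Pre-composition with an isomorphism, as an additive equivalence of hom groups. -/
@[simps] def precompEquiv {A B W : C} (e : A ≅ B) : (B ⟶ W) ≃+ (A ⟶ W) where
  toFun x := e.hom ≫ x
  invFun y := e.inv ≫ y
  left_inv x := by simp
  right_inv y := by simp
  map_add' x y := by simp [Preadditive.comp_add]

/-- The degree-one-step element of `Λ` associated to a map `P⟦n⟧ ⟶ P⟦m⟧`. -/
noncomputable def toLam {n m : ℤ} (f : P⟦n⟧ ⟶ P⟦m⟧) : lam P (n - m) :=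
  (shiftFunctor C m).preimage ((shiftFunctorAdd' C (n - m) m n (by omega)).inv.app P ≫ f)

theorem toLam_shift {n m : ℤ} (f : P⟦n⟧ ⟶ P⟦m⟧) :
    (toLam P f)⟦m⟧' = (shiftFunctorAdd' C (n - m) m n (by omega)).inv.app P ≫ f :=
  Functor.map_preimage _ _

theorem gsmul_toLam {M : C} {n m : ℤ} (f : P⟦n⟧ ⟶ P⟦m⟧) (y : P⟦m⟧ ⟶ M)
    (h : m + (n - m) = n) : gsmulHom P h y (toLam P f) = f ≫ y := by
  rw [gsmulHom, toLam_shift]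
  simp only [Category.assoc]
  rw [Iso.hom_inv_id_app_assoc]

theorem toLam_add {n m : ℤ} (f g : P⟦n⟧ ⟶ P⟦m⟧) :
    toLam P (f + g) = toLam P f + toLam P g := by
  apply (shiftFunctor C m).map_injective
  rw [Functor.map_add, toLam_shift, toLam_shift, toLam_shift, Preadditive.comp_add]

/-- Sparseness kills morphisms between shifted copies of `P` in wrong relative degrees. -/
theorem sparse_hom_zero {N : ℕ} (hsp : Sparse P N) {n m : ℤ} (h : ¬ ((N : ℤ) ∣ (n - m)))
    (f : P⟦n⟧ ⟶ P⟦m⟧) : f = 0 := by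
  have h0 : toLam P f = 0 := hsp _ h _
  have h1 : f = (shiftFunctorAdd' C (n - m) m n (by omega)).hom.app P ≫ (toLam P f)⟦m⟧' := by
    rw [toLam_shift, Iso.hom_inv_id_app_assoc]
  rw [h1, h0, Functor.map_zero, comp_zero]

theorem lam_eq_of_gsmul_id {k m l : ℤ} (h : m + k = l) (a b : lam P k)
    (H : gsmulHom P h (𝟙 (P⟦m⟧)) a = gsmulHom P h (𝟙 (P⟦m⟧)) b) : a = b := by
  apply (shiftFunctor C m).map_injective
  simp only [gsmulHom, Category.comp_id] at H
  exact (cancel_epi ((shiftFunctorAdd' C k m l (by omega)).hom.app P)).1 H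

theorem toLam_gsmul {n m k l : ℤ} (f : P⟦n⟧ ⟶ P⟦m⟧) (a : lam P k) (h : n + k = l) :
    toLam P (gsmulHom P h f a) = gmul P (show (n - m) + k = l - m by omega) (toLam P f) a := by
  apply lam_eq_of_gsmul_id P (show m + (l - m) = l by omega)
  rw [gsmul_toLam]
  have key : gsmulHom P h (gsmulHom P (show m + (n - m) = n by omega) (𝟙 (P⟦m⟧))
        (toLam P f)) a
      = gsmulHom P (show m + (l - m) = l by omega) (𝟙 (P⟦m⟧))
        (gmul P (show (n - m) + k = l - m by omega) (toLam P f) a) :=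
    (piMod P (P⟦m⟧)).smul_mulₓ (show m + (n - m) = n by omega)
      (show (n - m) + k = l - m by omega) h (show m + (l - m) = l by omega)
      (𝟙 (P⟦m⟧)) (toLam P f) a
  rw [← key, gsmul_toLam P f (𝟙 (P⟦m⟧)) (show m + (n - m) = n by omega)]
  simp only [Category.comp_id]

/-- Transposing a shift on the target to a shift of the source degree. -/
noncomputable def lower {A : C} (n t : ℤ) : (P⟦n⟧ ⟶ A⟦t⟧) ≃+ (P⟦n - t⟧ ⟶ A) where
  toFun x := (shiftFunctor C t).preimage
    ((shiftFunctorAdd' C (n - t) t n (by omega)).inv.app P ≫ x)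
  invFun y := (shiftFunctorAdd' C (n - t) t n (by omega)).hom.app P ≫ y⟦t⟧'
  left_inv x := by
    dsimp only
    rw [Functor.map_preimage, Iso.hom_inv_id_app_assoc]
  right_inv y := by
    dsimp only
    apply (shiftFunctor C t).map_injective
    rw [Functor.map_preimage, Iso.inv_hom_id_app_assoc]
  map_add' x y := by
    try dsimp only
    apply (shiftFunctor C t).map_injective
    rw [Functor.map_add, Functor.map_preimage, Functor.map_preimage, Functor.map_preimage,
      Preadditive.comp_add]

theorem lower_apply {A : C} (n t : ℤ) (x : P⟦n⟧ ⟶ A⟦t⟧) :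
    lower P n t x = (shiftFunctor C t).preimage
      ((shiftFunctorAdd' C (n - t) t n (by omega)).inv.app P ≫ x) := rfl

theorem lower_symm_apply {A : C} (n t : ℤ) (y : P⟦n - t⟧ ⟶ A) :
    (lower P n t).symm y = (shiftFunctorAdd' C (n - t) t n (by omega)).hom.app P ≫ y⟦t⟧' := rfl

theorem lower_natural {A B : C} (n t : ℤ) (x : P⟦n⟧ ⟶ A⟦t⟧) (φ : A ⟶ B) :
    lower P n t (x ≫ φ⟦t⟧') = lower P n t x ≫ φ := by
  apply (shiftFunctor C t).map_injective
  rw [lower_apply, lower_apply, Functor.map_comp, Functor.map_preimage, Functor.map_preimage,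
    Category.assoc]

theorem lower_symm_natural {A B : C} (n t : ℤ) (y : P⟦n - t⟧ ⟶ A) (φ : A ⟶ B) :
    (lower P n t).symm (y ≫ φ) = (lower P n t).symm y ≫ φ⟦t⟧' := by
  rw [lower_symm_apply, lower_symm_apply, Functor.map_comp, Category.assoc]

theorem lower_zero_iff {A : C} (n t : ℤ) (x : P⟦n⟧ ⟶ A⟦t⟧) :
    lower P n t x = 0 ↔ x = 0 := by
  constructor
  · intro h
    have := congrArg (lower P n t).symm h
    rwa [AddEquiv.symm_apply_apply, map_zero] at this
  · intro h; rw [h, map_zero]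

/-- Moving the source degree to a shift of the target. -/
noncomputable def raiseSrc {B : C} (n : ℤ) : (P⟦n⟧ ⟶ B) ≃+ (P ⟶ B⟦-n⟧) :=
  ((postcompEquiv ((shiftFunctorCompIsoId C (-n) n (by omega)).app B).symm).trans
    (lower P n n (A := B⟦-n⟧))).trans
    (precompEquiv ((shiftFunctorZero' C (n - n) (by omega)).app P).symm)

theorem raiseSrc_natural {B B' : C} (n : ℤ) (x : P⟦n⟧ ⟶ B) (φ : B ⟶ B') :
    raiseSrc P n (x ≫ φ) = raiseSrc P n x ≫ φ⟦(-n : ℤ)⟧' := by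
  have h1 : (x ≫ φ) ≫ (shiftFunctorCompIsoId C (-n) n (by omega)).inv.app B'
      = (x ≫ (shiftFunctorCompIsoId C (-n) n (by omega)).inv.app B) ≫ (φ⟦(-n : ℤ)⟧')⟦n⟧' := by
    rw [Category.assoc, Category.assoc]
    congr 1
    exact ((shiftFunctorCompIsoId C (-n) n (by omega)).inv.naturality φ)
  show ((shiftFunctorZero' C (n - n) (by omega)).app P).symm.hom ≫
      (lower P n n ((x ≫ φ) ≫ (shiftFunctorCompIsoId C (-n) n (by omega)).inv.app B')) = _
  rw [h1, lower_natural]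
  show _ = (((shiftFunctorZero' C (n - n) (by omega)).app P).symm.hom ≫
      (lower P n n (x ≫ (shiftFunctorCompIsoId C (-n) n (by omega)).inv.app B))) ≫ φ⟦(-n : ℤ)⟧'
  rw [Category.assoc]

end ShiftAux
section FreeAux

variable (P : C)

theorem mapRangeEquiv_of {ι : Type v} [DecidableEq ι] {β₁ β₂ : ι → Type v}
    [∀ i, AddCommGroup (β₁ i)] [∀ i, AddCommGroup (β₂ i)] (e : ∀ i, β₁ i ≃+ β₂ i) (i : ι)
    (x : β₁ i) :
    DFinsupp.mapRange.addEquiv e (DirectSum.of β₁ i x) = DirectSum.of β₂ i (e i x) := by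
  show DFinsupp.mapRange (fun i x => e i x) (fun i => (e i).map_zero) (DFinsupp.single i x)
    = DFinsupp.single i (e i x)
  exact DFinsupp.mapRange_single

variable {κ : Type v} [DecidableEq κ] (deg : κ → ℤ)

/-- The canonical map `⊕ₖ Hom(P⟦n⟧, P⟦deg k⟧) → Hom(P⟦n⟧, R)` attached to a family of
"generators" `j k : P⟦deg k⟧ ⟶ R`. -/
noncomputable def sumMap {R : C} (j : ∀ k, P⟦deg k⟧ ⟶ R) (n : ℤ) :
    (⨁ k, (P⟦n⟧ ⟶ P⟦deg k⟧)) →+ (P⟦n⟧ ⟶ R) :=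
  DirectSum.toAddMonoid fun k => AddMonoidHom.mk' (fun f => f ≫ j k)
    (fun f g => Preadditive.add_comp _ _ _ _ _ _)

theorem sumMap_of {R : C} (j : ∀ k, P⟦deg k⟧ ⟶ R) (n : ℤ) (k : κ)
    (u : P⟦n⟧ ⟶ P⟦deg k⟧) :
    sumMap P deg j n (DirectSum.of (fun k => (P⟦n⟧ ⟶ P⟦deg k⟧)) k u) = u ≫ j k := by
  unfold sumMap
  exact DirectSum.toAddMonoid_of _ _ _

theorem compactComparison_of [HasCoproducts.{v} C] (X : κ → C) (k : κ)
    (v : P ⟶ X k) :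
    compactComparison P X (DirectSum.of (fun k => (P ⟶ X k)) k v) = v ≫ Sigma.ι X k := by
  unfold compactComparison
  exact DirectSum.toAddMonoid_of _ _ _

/-- `R` decomposes as a "free object" on the generators `j k`. -/
def Decomp {R : C} (j : ∀ k, P⟦deg k⟧ ⟶ R) : Prop :=
  ∀ n, Function.Bijective (sumMap P deg j n)

theorem decomp_coprod [HasCoproducts.{v} C] (hcpt : IsCompactObj P) :
    Decomp P deg (fun k => Sigma.ι (fun k => P⟦deg k⟧) k) := by
  classical
  intro n
  let G := shiftFunctor C (-n)
  let e₁ : (⨁ k, (P⟦n⟧ ⟶ P⟦deg k⟧)) ≃+ (⨁ k, (P ⟶ G.obj (P⟦deg k⟧))) :=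
    DFinsupp.mapRange.addEquiv (fun k => raiseSrc P n)
  let e₂ : (⨁ k, (P ⟶ G.obj (P⟦deg k⟧))) ≃+ (P ⟶ ∐ fun k => G.obj (P⟦deg k⟧)) :=
    AddEquiv.ofBijective _ (hcpt κ (fun k => G.obj (P⟦deg k⟧)))
  let e₃ : (P ⟶ ∐ fun k => G.obj (P⟦deg k⟧)) ≃+ (P ⟶ G.obj (∐ fun k => P⟦deg k⟧)) :=
    postcompEquiv (asIso (sigmaComparison G (fun k => P⟦deg k⟧)))
  let e₄ : (P ⟶ G.obj (∐ fun k => P⟦deg k⟧)) ≃+ (P⟦n⟧ ⟶ ∐ fun k => P⟦deg k⟧) :=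
    (raiseSrc P n).symm
  have key : ∀ x, sumMap P deg (fun k => Sigma.ι (fun k => P⟦deg k⟧) k) n x
      = e₄ (e₃ (e₂ (e₁ x))) := by
    intro x
    induction x using DirectSum.induction_on with
    | zero => simp only [map_zero]
    | of k u =>
        have s1 : e₁ (DirectSum.of (fun k => (P⟦n⟧ ⟶ P⟦deg k⟧)) k u)
            = DirectSum.of (fun k => (P ⟶ G.obj (P⟦deg k⟧))) k (raiseSrc P n u) :=
          mapRangeEquiv_of (β₁ := fun k => (P⟦n⟧ ⟶ P⟦deg k⟧))
            (β₂ := fun k => (P ⟶ G.obj (P⟦deg k⟧))) (fun k => raiseSrc P n) k u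
        have s2 : e₂ (DirectSum.of (fun k => (P ⟶ G.obj (P⟦deg k⟧))) k (raiseSrc P n u))
            = raiseSrc P n u ≫ Sigma.ι (fun k => G.obj (P⟦deg k⟧)) k := by
          show compactComparison P (fun k => G.obj (P⟦deg k⟧))
            (DirectSum.of (fun k => (P ⟶ G.obj (P⟦deg k⟧))) k (raiseSrc P n u)) = _
          exact compactComparison_of P _ k _
        have s3 : e₃ (raiseSrc P n u ≫ Sigma.ι (fun k => G.obj (P⟦deg k⟧)) k)
            = raiseSrc P n u ≫ G.map (Sigma.ι (fun k => P⟦deg k⟧) k) := by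
          show (raiseSrc P n u ≫ Sigma.ι (fun k => G.obj (P⟦deg k⟧)) k)
              ≫ sigmaComparison G (fun k => P⟦deg k⟧) = _
          rw [Category.assoc, ι_comp_sigmaComparison]
        have s4 : e₄ (raiseSrc P n u ≫ G.map (Sigma.ι (fun k => P⟦deg k⟧) k))
            = u ≫ Sigma.ι (fun k => P⟦deg k⟧) k := by
          rw [← raiseSrc_natural]
          exact (raiseSrc P n).symm_apply_apply _
        calc sumMap P deg (fun k => Sigma.ι (fun k => P⟦deg k⟧) k) n
              (DirectSum.of (fun k => (P⟦n⟧ ⟶ P⟦deg k⟧)) k u)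
            = u ≫ Sigma.ι (fun k => P⟦deg k⟧) k := sumMap_of P deg _ n k u
          _ = e₄ (raiseSrc P n u ≫ G.map (Sigma.ι (fun k => P⟦deg k⟧) k)) := s4.symm
          _ = e₄ (e₃ (raiseSrc P n u ≫ Sigma.ι (fun k => G.obj (P⟦deg k⟧)) k)) :=
              (congrArg e₄ s3).symm
          _ = e₄ (e₃ (e₂ (DirectSum.of (fun k => (P ⟶ G.obj (P⟦deg k⟧))) k
              (raiseSrc P n u)))) := (congrArg (fun z => e₄ (e₃ z)) s2).symm
          _ = e₄ (e₃ (e₂ (e₁ (DirectSum.of (fun k => (P⟦n⟧ ⟶ P⟦deg k⟧)) k u)))) :=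
              (congrArg (fun z => e₄ (e₃ (e₂ z))) s1).symm
    | add x y hx hy => rw [map_add, hx, hy, map_add, map_add, map_add, map_add]
  have heq : ⇑(sumMap P deg (fun k => Sigma.ι (fun k => P⟦deg k⟧) k) n)
      = ⇑(((e₁.trans e₂).trans e₃).trans e₄) := funext key
  show Function.Bijective (sumMap P deg (fun k => Sigma.ι (fun k => P⟦deg k⟧) k) n)
  rw [heq]
  exact (((e₁.trans e₂).trans e₃).trans e₄).bijective

theorem decomp_shift {R : C} {j : ∀ k, P⟦deg k⟧ ⟶ R} (hd : Decomp P deg j) :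
    Decomp P (fun k => deg k + 1)
      (fun k => (shiftFunctorAdd' C (deg k) 1 (deg k + 1) rfl).hom.app P
        ≫ (j k)⟦(1 : ℤ)⟧') := by
  classical
  intro n
  let e₀ : ∀ k, (P⟦n⟧ ⟶ P⟦deg k + 1⟧) ≃+ (P⟦n - 1⟧ ⟶ P⟦deg k⟧) := fun k =>
    (postcompEquiv ((shiftFunctorAdd' C (deg k) 1 (deg k + 1) rfl).app P)).trans
      (lower P n 1)
  let e₁ : (⨁ k, (P⟦n⟧ ⟶ P⟦deg k + 1⟧)) ≃+ (⨁ k, (P⟦n - 1⟧ ⟶ P⟦deg k⟧)) :=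
    DFinsupp.mapRange.addEquiv e₀
  let e₂ : (⨁ k, (P⟦n - 1⟧ ⟶ P⟦deg k⟧)) ≃+ (P⟦n - 1⟧ ⟶ R) :=
    AddEquiv.ofBijective _ (hd (n - 1))
  let e₃ : (P⟦n - 1⟧ ⟶ R) ≃+ (P⟦n⟧ ⟶ R⟦(1 : ℤ)⟧) := (lower P n 1).symm
  have key : ∀ x, sumMap P (fun k => deg k + 1)
      (fun k => (shiftFunctorAdd' C (deg k) 1 (deg k + 1) rfl).hom.app P
        ≫ (j k)⟦(1 : ℤ)⟧') n x = e₃ (e₂ (e₁ x)) := by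
    intro x
    induction x using DirectSum.induction_on with
    | zero => simp only [map_zero]
    | of k u =>
        have s1 : e₁ (DirectSum.of (fun k => (P⟦n⟧ ⟶ P⟦deg k + 1⟧)) k u)
            = DirectSum.of (fun k => (P⟦n - 1⟧ ⟶ P⟦deg k⟧)) k (e₀ k u) :=
          mapRangeEquiv_of (β₁ := fun k => (P⟦n⟧ ⟶ P⟦deg k + 1⟧))
            (β₂ := fun k => (P⟦n - 1⟧ ⟶ P⟦deg k⟧)) e₀ k u
        have s2 : e₂ (DirectSum.of (fun k => (P⟦n - 1⟧ ⟶ P⟦deg k⟧)) k (e₀ k u))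
            = (e₀ k u) ≫ j k := sumMap_of P deg j (n - 1) k _
        have s0 : e₀ k u = lower P n 1
            (u ≫ (shiftFunctorAdd' C (deg k) 1 (deg k + 1) rfl).hom.app P) := rfl
        have s3 : e₃ ((e₀ k u) ≫ j k)
            = u ≫ ((shiftFunctorAdd' C (deg k) 1 (deg k + 1) rfl).hom.app P
              ≫ (j k)⟦(1 : ℤ)⟧') := by
          show (lower P n 1).symm ((e₀ k u) ≫ j k) = _
          rw [lower_symm_natural, s0, (lower P n 1).symm_apply_apply, Category.assoc]
        calc sumMap P (fun k => deg k + 1)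
              (fun k => (shiftFunctorAdd' C (deg k) 1 (deg k + 1) rfl).hom.app P
                ≫ (j k)⟦(1 : ℤ)⟧') n (DirectSum.of (fun k => (P⟦n⟧ ⟶ P⟦deg k + 1⟧)) k u)
            = u ≫ ((shiftFunctorAdd' C (deg k) 1 (deg k + 1) rfl).hom.app P
              ≫ (j k)⟦(1 : ℤ)⟧') := sumMap_of P (fun k => deg k + 1)
                (fun k => (shiftFunctorAdd' C (deg k) 1 (deg k + 1) rfl).hom.app P
                  ≫ (j k)⟦(1 : ℤ)⟧') n k u
          _ = e₃ ((e₀ k u) ≫ j k) := s3.symm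
          _ = e₃ (e₂ (DirectSum.of (fun k => (P⟦n - 1⟧ ⟶ P⟦deg k⟧)) k (e₀ k u))) :=
              (congrArg e₃ s2).symm
          _ = e₃ (e₂ (e₁ (DirectSum.of (fun k => (P⟦n⟧ ⟶ P⟦deg k + 1⟧)) k u))) :=
              (congrArg (fun z => e₃ (e₂ z)) s1).symm
    | add x y hx hy => rw [map_add, hx, hy, map_add, map_add, map_add]
  have heq : ⇑(sumMap P (fun k => deg k + 1)
      (fun k => (shiftFunctorAdd' C (deg k) 1 (deg k + 1) rfl).hom.app P
        ≫ (j k)⟦(1 : ℤ)⟧') n) = ⇑((e₁.trans e₂).trans e₃) := funext key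
  show Function.Bijective _
  rw [heq]
  exact ((e₁.trans e₂).trans e₃).bijective

theorem decomp_inDegrees {R : C} {j : ∀ k, P⟦deg k⟧ ⟶ R} (hd : Decomp P deg j)
    {N : ℕ} (hNz : N ≠ 0) (hsp : Sparse P N) (i : ZMod N)
    (hdeg : ∀ k, ((deg k : ℤ) : ZMod N) = i) : InDegrees N i (piMod P R) := by
  classical
  haveI : NeZero N := ⟨hNz⟩
  intro n hn x
  obtain ⟨y, rfl⟩ := (hd n).2 x
  induction y using DirectSum.induction_on with
  | zero => simp only [map_zero]
  | of k u =>
      rw [sumMap_of]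
      have hu : u = 0 := by
        apply sparse_hom_zero P hsp ?_ u
        intro hdvd
        apply hn
        have : ((n - deg k : ℤ) : ZMod N) = 0 :=
          (ZMod.intCast_zmod_eq_zero_iff_dvd _ _).2 hdvd
        have h2 : ((n : ℤ) : ZMod N) = ((deg k : ℤ) : ZMod N) := by
          have := sub_eq_zero.1 (by push_cast at this ⊢; exact this)
          exact this
        rw [h2, hdeg k]
      rw [hu, Limits.zero_comp]
  | add x y hx hy => rw [map_add, hx, hy, add_zero]

theorem decomp_realize [HasCoproducts.{v} C] {M : C}
    (hd : Decomp P deg (fun k => Sigma.ι (fun k => P⟦deg k⟧) k))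
    (α : GHom (piMod P (∐ fun k => P⟦deg k⟧)) (piMod P M)) :
    ∃ φ : (∐ fun k => P⟦deg k⟧) ⟶ M,
      ∀ (n : ℤ) (x : P⟦n⟧ ⟶ (∐ fun k => P⟦deg k⟧)), x ≫ φ = α.app n x := by
  classical
  refine ⟨Sigma.desc (fun k => α.app (deg k) (Sigma.ι (fun k => P⟦deg k⟧) k)), ?_⟩
  intro n x
  obtain ⟨y, rfl⟩ := (hd n).2 x
  induction y using DirectSum.induction_on with
  | zero => simp only [map_zero, Limits.zero_comp]
  | of k u =>
      rw [sumMap_of]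
      have h2 : α.app n (gsmulHom P (show deg k + (n - deg k) = n by omega) (Sigma.ι (fun k => P⟦deg k⟧) k)
          (toLam P u)) = gsmulHom P (show deg k + (n - deg k) = n by omega)
            (α.app (deg k) (Sigma.ι (fun k => P⟦deg k⟧) k)) (toLam P u) :=
        α.app_smul (show deg k + (n - deg k) = n by omega) (Sigma.ι (fun k => P⟦deg k⟧) k) (toLam P u)
      have h3 : α.app n (u ≫ Sigma.ι (fun k => P⟦deg k⟧) k) = u ≫ α.app (deg k) (Sigma.ι (fun k => P⟦deg k⟧) k) := by
        rw [← gsmul_toLam P u (Sigma.ι (fun k => P⟦deg k⟧) k) (show deg k + (n - deg k) = n by omega), h2,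
          gsmul_toLam]
      rw [h3, Category.assoc, colimit.ι_desc]
      rfl
  | add x y hx hy =>
      rw [map_add, map_add, Preadditive.add_comp, hx, hy]

theorem decomp_projective {R : C} {j : ∀ k, P⟦deg k⟧ ⟶ R} (hd : Decomp P deg j) :
    IsProjective (piMod P R) := by
  classical
  intro A B e he f
  have hlift : ∀ k, ∃ a : A.M (deg k), e.app (deg k) a = f.app (deg k) (j k) :=
    fun k => he (deg k) _
  choose a ha using hlift
  let comp : ∀ n : ℤ, (⨁ k, (P⟦n⟧ ⟶ P⟦deg k⟧)) →+ A.M n := fun n =>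
    DirectSum.toAddMonoid (fun k => AddMonoidHom.mk'
      (fun u => A.smul (show deg k + (n - deg k) = n by omega) (a k) (toLam P u))
      (fun u v => by (try dsimp only); rw [toLam_add, A.smul_addₓ]))
  have hcomp_of : ∀ (n : ℤ) (k : κ) (u : P⟦n⟧ ⟶ P⟦deg k⟧),
      comp n (DirectSum.of _ k u)
        = A.smul (show deg k + (n - deg k) = n by omega) (a k) (toLam P u) := by
    intro n k u
    exact DirectSum.toAddMonoid_of _ _ _
  let eqv : ∀ n, (⨁ k, (P⟦n⟧ ⟶ P⟦deg k⟧)) ≃+ (P⟦n⟧ ⟶ R) := fun n =>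
    AddEquiv.ofBijective _ (hd n)
  have heqv : ∀ (n : ℤ) y, eqv n y = sumMap P deg j n y := fun n y => rfl
  -- the candidate lift
  refine ⟨{ app := fun n => (comp n).comp (eqv n).symm.toAddMonoidHom
            app_smul := ?_ }, ?_⟩
  · intro n k0 l h x b
    -- componentwise smul map
    let mapSmul : (⨁ k, (P⟦n⟧ ⟶ P⟦deg k⟧)) →+ (⨁ k, (P⟦l⟧ ⟶ P⟦deg k⟧)) :=
      DirectSum.toAddMonoid (fun k => (DirectSum.of (fun k => (P⟦l⟧ ⟶ P⟦deg k⟧)) k).comp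
        (AddMonoidHom.mk' (fun u => gsmulHom P h u b)
          (fun u v => by
            try dsimp only
            simp only [gsmulHom, Preadditive.add_comp, Preadditive.comp_add])))
    have claim1 : ∀ y, sumMap P deg j l (mapSmul y)
        = gsmulHom P h (sumMap P deg j n y) b := by
      intro y
      induction y using DirectSum.induction_on with
      | zero =>
          rw [map_zero, map_zero, map_zero]
          exact ((piMod P R).zero_smulₓ h b).symm
      | of k u =>
          have h1 : mapSmul (DirectSum.of _ k u)
              = DirectSum.of _ k (gsmulHom P h u b) := DirectSum.toAddMonoid_of _ _ _
          rw [h1, sumMap_of, sumMap_of]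
          simp only [gsmulHom, Category.assoc]
      | add s t hs ht =>
          rw [map_add, map_add, hs, ht, map_add]
          exact ((piMod P R).add_smulₓ h _ _ b).symm
    have claim2 : ∀ y, comp l (mapSmul y) = A.smul h (comp n y) b := by
      intro y
      induction y using DirectSum.induction_on with
      | zero =>
          rw [map_zero, map_zero, map_zero]
          exact (A.zero_smulₓ h b).symm
      | of k u =>
          have h1 : mapSmul (DirectSum.of _ k u)
              = DirectSum.of _ k (gsmulHom P h u b) := DirectSum.toAddMonoid_of _ _ _
          rw [h1, hcomp_of, hcomp_of, toLam_gsmul P u b h]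
          exact (A.smul_mulₓ _ _ _ _ (a k) (toLam P u) b).symm
      | add s t hs ht =>
          rw [map_add, map_add, hs, ht, map_add]
          exact (A.add_smulₓ h _ _ b).symm
    -- now assemble
    have hx : x = eqv n ((eqv n).symm x) := ((eqv n).apply_symm_apply x).symm
    have step : (eqv l).symm (gsmulHom P h x b) = mapSmul ((eqv n).symm x) := by
      apply (eqv l).injective
      rw [(eqv l).apply_symm_apply]
      rw [heqv, claim1, ← heqv, (eqv n).apply_symm_apply]
    show comp l ((eqv l).symm ((piMod P R).smul h x b)) = A.smul h (comp n ((eqv n).symm x)) b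
    rw [show (piMod P R).smul h x b = gsmulHom P h x b from rfl, step, claim2]
  · apply GHom.ext
    intro n x
    show e.app n (comp n ((eqv n).symm x)) = f.app n x
    conv_rhs => rw [← (eqv n).apply_symm_apply x]
    generalize (eqv n).symm x = y
    induction y using DirectSum.induction_on with
    | zero => rw [map_zero, map_zero, map_zero, map_zero]
    | of k u =>
        rw [hcomp_of]
        have h1 : e.app n (A.smul (show deg k + (n - deg k) = n by omega) (a k) (toLam P u))
            = B.smul (show deg k + (n - deg k) = n by omega) (e.app (deg k) (a k)) (toLam P u) :=
          e.app_smul (show deg k + (n - deg k) = n by omega) (a k) (toLam P u)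
        have h3 : eqv n (DirectSum.of (fun k => (P⟦n⟧ ⟶ P⟦deg k⟧)) k u) = u ≫ j k :=
          sumMap_of P deg j n k u
        rw [h1, ha, h3]
        have h4 : u ≫ j k = gsmulHom P (show deg k + (n - deg k) = n by omega) (j k)
            (toLam P u) := (gsmul_toLam P u (j k) _).symm
        rw [h4]
        exact (f.app_smul (show deg k + (n - deg k) = n by omega) (j k) (toLam P u)).symm
    | add s t hs ht => rw [map_add, map_add, map_add, map_add, hs, ht]

end FreeAux
section TriangleAux

variable (P : C)

/-- Shifting as an additive equivalence on hom groups. -/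
noncomputable def shiftMapEquiv (t : ℤ) (A B : C) : (A ⟶ B) ≃+ (A⟦t⟧ ⟶ B⟦t⟧) where
  toFun u := u⟦t⟧'
  invFun x := (shiftFunctor C t).preimage x
  left_inv u := Functor.preimage_map u
  right_inv x := Functor.map_preimage _ _
  map_add' u v := Functor.map_add _

/-- If a morphism becomes an isomorphism on all graded homs from `P`, it is an
isomorphism, provided `P` generates. -/
theorem pi_iso (hgen : IsGenerator P) {A B : C} (φ : A ⟶ B)
    (hinj : ∀ (n : ℤ) (x : P⟦n⟧ ⟶ A), x ≫ φ = 0 → x = 0)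
    (hsurj : ∀ (n : ℤ) (y : P⟦n⟧ ⟶ B), ∃ x : P⟦n⟧ ⟶ A, x ≫ φ = y) : IsIso φ := by
  obtain ⟨Z, g, w, hT⟩ := Pretriangulated.distinguished_cocone_triangle φ
  have hZ : IsZero Z := by
    refine hgen Z ?_
    intro n f
    have hz31 := comp_distTriang_mor_zero₃₁ _ hT
    have hz12 := comp_distTriang_mor_zero₁₂ _ hT
    change w ≫ φ⟦(1 : ℤ)⟧' = 0 at hz31; change φ ≫ g = 0 at hz12
    have h1 : (f ≫ w) ≫ φ⟦(1 : ℤ)⟧' = 0 := by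
      rw [Category.assoc, hz31, comp_zero]
    have h2 : f ≫ w = 0 := by
      have h3 : lower P n 1 (f ≫ w) ≫ φ = 0 := by
        rw [← lower_natural, h1, map_zero]
      have h4 := hinj (n - 1) _ h3
      exact (lower_zero_iff P n 1 (f ≫ w)).1 h4
    obtain ⟨y, hy⟩ : ∃ y : P⟦n⟧ ⟶ B, f = y ≫ g := Triangle.coyoneda_exact₃ _ hT f h2
    try dsimp at hy
    obtain ⟨x, hx⟩ := hsurj n y
    rw [hy, ← hx, Category.assoc, hz12, comp_zero]
  exact (Triangle.isZero₃_iff_isIso₁ _ hT).1 hZ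

/-- Construction of a degreewise-surjective "free cover" of an object, concentrated
in a prescribed class of degrees. -/
theorem cover [HasCoproducts.{v} C] (hcpt : IsCompactObj P) {N : ℕ} (hNz : N ≠ 0)
    (hsp : Sparse P N) (i : ZMod N) (M : C) (hM : InDegrees N i (piMod P M)) :
    ∃ (Q : C) (g : Q ⟶ M),
      (∀ (n : ℤ) (y : P⟦n⟧ ⟶ M), ∃ x : P⟦n⟧ ⟶ Q, x ≫ g = y) ∧
      IsProjective (piMod P Q) ∧ InDegrees N i (piMod P Q) ∧
      IsProjective (piMod P (Q⟦(1 : ℤ)⟧)) ∧ InDegrees N (i + 1) (piMod P (Q⟦(1 : ℤ)⟧)) ∧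
      (∀ (M' : C) (α : GHom (piMod P Q) (piMod P M')),
        ∃ φ : Q ⟶ M', ∀ (n : ℤ) (x : P⟦n⟧ ⟶ Q), x ≫ φ = α.app n x) ∧
      (∀ (M' : C) (φ : Q ⟶ M'), (∀ (n : ℤ) (x : P⟦n⟧ ⟶ Q), x ≫ φ = 0) → φ = 0) := by
  classical
  set κ : Type v := {p : Σ n : ℤ, (P⟦n⟧ ⟶ M) // ((p.1 : ℤ) : ZMod N) = i} with hκ
  set deg : κ → ℤ := fun p => p.1.1 with hdeg
  have hd : Decomp P deg (fun k => Sigma.ι (fun k => P⟦deg k⟧) k) := decomp_coprod P deg hcpt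
  have hd1 := decomp_shift P deg hd
  refine ⟨∐ fun k => P⟦deg k⟧, Sigma.desc (fun k => k.1.2), ?_, ?_, ?_, ?_, ?_, ?_, ?_⟩
  · intro n y
    by_cases hni : ((n : ℤ) : ZMod N) = i
    · refine ⟨Sigma.ι (fun k => P⟦deg k⟧) (⟨⟨n, y⟩, hni⟩ : κ), ?_⟩
      exact colimit.ι_desc _ _
    · refine ⟨0, ?_⟩
      rw [Limits.zero_comp, hM n hni y]
  · exact decomp_projective P deg hd
  · exact decomp_inDegrees P deg hd hNz hsp i (fun k => k.2)
  · exact decomp_projective P (fun k => deg k + 1) hd1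
  · refine decomp_inDegrees P (fun k => deg k + 1) hd1 hNz hsp (i + 1) ?_
    intro k
    have := k.2
    push_cast
    rw [this]
  · intro M' α
    exact decomp_realize P deg hd α
  · intro M' φ hφ
    apply Limits.Sigma.hom_ext
    intro k
    have := hφ (deg k) (Sigma.ι (fun k => P⟦deg k⟧) k)
    rw [this, Limits.comp_zero]

end TriangleAux
/-- Let `P` be a compact generator of the triangulated category `C`
with `Λ` `N`-sparse, and let `X, Y` be objects with `proj dim π_* X ≤ 1`,
`π_* X ∈ B[i]` and `π_* Y ∈ B[j]` where `j ≠ i` and `j ≠ i + 1` in `ℤ/N`. Then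
`Hom_T(X, Y) = 0`. -/
theorem statement_8 [IsTriangulated C] [HasCoproducts.{v} C]
    (P : C) (hcpt : IsCompactObj P) (hgen : IsGenerator P)
    (N : ℕ) (hN : 2 ≤ N) (hsp : Sparse P N)
    (i j : ZMod N) (X Y : C) (hpd : projDimLE 1 (piMod P X))
    (hX : InDegrees N i (piMod P X)) (hY : InDegrees N j (piMod P Y))
    (hji : j ≠ i) (hji' : j ≠ i + 1) :
    ∀ f : X ⟶ Y, f = 0 := by
  classical
  have hNz : N ≠ 0 := by omega
  intro f
  -- Step 1: `π_* f = 0` for degree reasons.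
  have hpif : ∀ (n : ℤ) (u : P⟦n⟧ ⟶ X), u ≫ f = 0 := by
    intro n u
    by_cases hni : ((n : ℤ) : ZMod N) = i
    · exact hY n (fun hc => hji (by rw [← hc, hni])) (u ≫ f)
    · rw [hX n hni u, Limits.zero_comp]
  -- Step 2: free cover of `X` in degrees `≡ i`.
  obtain ⟨Q₀, g₀, hsurj₀, hQ₀proj, hQ₀deg, hQ₀1proj, hQ₀1deg, hreal₀, hfaith₀⟩ :=
    cover P hcpt hNz hsp i X hX
  -- Step 3: triangle `Q₀ → X → Z → Q₀⟦1⟧`.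
  obtain ⟨Z, u, w, hT⟩ := Pretriangulated.distinguished_cocone_triangle g₀
  have hz12 := comp_distTriang_mor_zero₁₂ _ hT
  have hz23 := comp_distTriang_mor_zero₂₃ _ hT
  have hz31 := comp_distTriang_mor_zero₃₁ _ hT
  change g₀ ≫ u = 0 at hz12; change u ≫ w = 0 at hz23; change w ≫ g₀⟦(1 : ℤ)⟧' = 0 at hz31
  have h1 : g₀ ≫ f = 0 := by
    apply hfaith₀ Y
    intro n x
    rw [← Category.assoc]
    exact hpif n (x ≫ g₀)
  obtain ⟨h, hh⟩ : ∃ h : Z ⟶ Y, f = u ≫ h := Triangle.yoneda_exact₂ _ hT f h1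
  try dsimp at hh
  -- `π_* w` is injective.
  have hker : ∀ (n : ℤ) (x : P⟦n⟧ ⟶ Z), x ≫ w = 0 → x = 0 := by
    intro n x hx
    obtain ⟨y, hy⟩ : ∃ y : P⟦n⟧ ⟶ X, x = y ≫ u := Triangle.coyoneda_exact₃ _ hT x hx
    try dsimp at hy
    obtain ⟨t, ht⟩ := hsurj₀ n y
    rw [hy, ← ht, Category.assoc, hz12, comp_zero]
  -- `π_* Z` is concentrated in degrees `≡ i + 1`.
  have hdegZ : InDegrees N (i + 1) (piMod P Z) := by
    intro n hn x
    exact hker n x (hQ₀1deg n hn (x ≫ w))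
  -- `π_* h = 0` for degree reasons.
  have hpih : ∀ (n : ℤ) (x : P⟦n⟧ ⟶ Z), x ≫ h = 0 := by
    intro n x
    by_cases hni : ((n : ℤ) : ZMod N) = i + 1
    · exact hY n (fun hc => hji' (by rw [← hc, hni])) (x ≫ h)
    · rw [hdegZ n hni x, Limits.zero_comp]
  -- Step 4: `π_* Z` is projective (Schanuel).
  have hseA : IsShortExact (piGHom P w) (piGHom P (g₀⟦(1 : ℤ)⟧')) := by
    constructor
    · intro n x y hxy
      have hxy' : x ≫ w = y ≫ w := hxy
      have hsub : (x - y) ≫ w = 0 := by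
        rw [Preadditive.sub_comp, hxy', sub_self]
      exact sub_eq_zero.1 (hker n (x - y) hsub)
    · intro n y
      obtain ⟨t, ht⟩ := hsurj₀ (n - 1) (lower P n 1 y)
      refine ⟨(lower P n 1).symm t, ?_⟩
      show (lower P n 1).symm t ≫ g₀⟦(1 : ℤ)⟧' = y
      apply (lower P n 1).injective
      rw [lower_natural, (lower P n 1).apply_symm_apply, ht]
    · intro n x
      constructor
      · intro hx
        have hx' : x ≫ g₀⟦(1 : ℤ)⟧' = 0 := hx
        obtain ⟨g, hg⟩ : ∃ g : P⟦n⟧ ⟶ Z, x = g ≫ w := Triangle.coyoneda_exact₁ _ hT x hx'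
        try dsimp at hg
        exact ⟨g, hg.symm⟩
      · rintro ⟨g, rfl⟩
        show (g ≫ w) ≫ g₀⟦(1 : ℤ)⟧' = 0
        rw [Category.assoc, hz31, comp_zero]
  obtain ⟨F, K, ε, ι, hF, hseB0, hK⟩ := hpd
  have hKproj : IsProjective K := hK
  have hbij : ∀ n, Function.Bijective ((triangleConnect P (𝟙 (X⟦(1 : ℤ)⟧))).app n) := by
    intro n
    have happ : ∀ (u' : P⟦n⟧ ⟶ X⟦(1 : ℤ)⟧), (triangleConnect P (𝟙 (X⟦(1 : ℤ)⟧))).app n u'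
        = (shiftFunctorAdd' C n (-1) (n - 1) (by omega)).hom.app P ≫ u'⟦(-1 : ℤ)⟧'
          ≫ (shiftFunctorCompIsoId C (1 : ℤ) (-1) (by omega)).hom.app X := by
      intro u'
      show _ ≫ (u' ≫ 𝟙 _)⟦(-1 : ℤ)⟧' ≫ _ = _
      rw [Category.comp_id]
    have hfun : ⇑((triangleConnect P (𝟙 (X⟦(1 : ℤ)⟧))).app n)
        = ⇑(((shiftMapEquiv (-1 : ℤ) (P⟦n⟧) (X⟦(1 : ℤ)⟧)).trans
            (postcompEquiv (asIso
              ((shiftFunctorCompIsoId C (1 : ℤ) (-1) (by omega)).hom.app X)))).trans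
            (precompEquiv (asIso
              ((shiftFunctorAdd' C n (-1) (n - 1) (by omega)).hom.app P)))) := by
      funext u'
      rw [happ u']
      rfl
    rw [hfun]
    exact AddEquiv.bijective _
  let ciso : GIso (piMod P (X⟦(1 : ℤ)⟧)) (gshift 1 (piMod P X)) :=
    gisoOfBijective _ hbij
  let ρB : GHom (gshift 1 F) (piMod P (X⟦(1 : ℤ)⟧)) := ciso.inv.comp (gshiftG 1 ε)
  have cinv_zero : ∀ (n : ℤ) (z : (gshift 1 (piMod P X)).M n),
      ciso.inv.app n z = 0 → z = 0 := by
    intro n z hz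
    have h2 : ciso.hom.app n (ciso.inv.app n z) = z :=
      congrArg (fun g : GHom _ _ => g.app n z) ciso.inv_hom_id
    rw [← h2, hz, map_zero]
  have hseB : IsShortExact (gshiftG 1 ι) ρB := by
    constructor
    · intro n
      exact (gshift_shortExact 1 hseB0).mono n
    · intro n y
      obtain ⟨x, hx⟩ := hseB0.epi (n - 1) (ciso.hom.app n y)
      refine ⟨x, ?_⟩
      show ciso.inv.app n ((gshiftG 1 ε).app n x) = y
      have hx2 : (gshiftG 1 ε).app n x = ε.app (n - 1) x := rfl
      rw [hx2, hx]
      exact congrArg (fun g : GHom _ _ => g.app n y) ciso.hom_inv_id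
    · intro n x
      constructor
      · intro hx
        have hx' : (gshiftG 1 ε).app n x = 0 := cinv_zero n _ hx
        exact (hseB0.exact (n - 1) x).1 hx'
      · rintro ⟨z, rfl⟩
        show ciso.inv.app n ((gshiftG 1 ε).app n ((gshiftG 1 ι).app n z)) = 0
        have hz : (gshiftG 1 ε).app n ((gshiftG 1 ι).app n z) = 0 :=
          (hseB0.exact (n - 1) _).2 ⟨z, rfl⟩
        rw [hz, map_zero]
  have ses1 := pb_shortExact_snd (α := piGHom P (g₀⟦(1 : ℤ)⟧')) ρB hseA
  have ses2 := pb_shortExact_fst (piGHom P (g₀⟦(1 : ℤ)⟧')) (β := ρB) hseB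
  obtain ⟨σ, hσ⟩ := exists_section (pbSnd (piGHom P (g₀⟦(1 : ℤ)⟧')) ρB) ses1.epi
    (gshift_isProjective 1 hF)
  obtain ⟨r, hrι, -⟩ := exists_retraction ses1 hσ
  have hDproj : IsProjective (pullbackMod (piGHom P (g₀⟦(1 : ℤ)⟧')) ρB) :=
    isProjective_of_ses ses2 (gshift_isProjective 1 hKproj) hQ₀1proj
  have hprojZ : IsProjective (piMod P Z) := isProjective_of_retract _ r hrι hDproj
  -- Step 5: the crux.
  obtain ⟨Q₁, q, hsurj₁, -, -, -, -, hreal₁, hfaith₁⟩ := cover P hcpt hNz hsp (i + 1) Z hdegZ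
  obtain ⟨V, v, δ, hT₁⟩ := Pretriangulated.distinguished_cocone_triangle₁ q
  have ht12 := comp_distTriang_mor_zero₁₂ _ hT₁
  have ht23 := comp_distTriang_mor_zero₂₃ _ hT₁
  have ht31 := comp_distTriang_mor_zero₃₁ _ hT₁
  change v ≫ q = 0 at ht12; change q ≫ δ = 0 at ht23; change δ ≫ v⟦(1 : ℤ)⟧' = 0 at ht31
  have hkerV : ∀ (n : ℤ) (x : P⟦n⟧ ⟶ V), x ≫ v = 0 → x = 0 := by
    intro n x hx
    have hx1 : ((shiftFunctorAdd' C n 1 (n + 1) rfl).hom.app P ≫ x⟦(1 : ℤ)⟧')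
        ≫ v⟦(1 : ℤ)⟧' = 0 := by
      rw [Category.assoc, ← Functor.map_comp, hx, Functor.map_zero, comp_zero]
    obtain ⟨g, hg⟩ : ∃ g : P⟦n + 1⟧ ⟶ Z,
        (shiftFunctorAdd' C n 1 (n + 1) rfl).hom.app P ≫ x⟦(1 : ℤ)⟧' = g ≫ δ := Triangle.coyoneda_exact₁ _ hT₁ _ hx1
    try dsimp at hg
    obtain ⟨t, ht⟩ := hsurj₁ (n + 1) g
    rw [← ht, Category.assoc, ht23, comp_zero] at hg
    have hx2 : x⟦(1 : ℤ)⟧' = 0 := by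
      have h7 := congrArg (fun z => (shiftFunctorAdd' C n 1 (n + 1) rfl).inv.app P ≫ z) hg
      dsimp at h7
      rwa [Iso.inv_hom_id_app_assoc, comp_zero] at h7
    apply (shiftFunctor C (1 : ℤ)).map_injective
    rw [hx2, Functor.map_zero]
  have hseV : IsShortExact (piGHom P v) (piGHom P q) := by
    constructor
    · intro n x y hxy
      have hxy' : x ≫ v = y ≫ v := hxy
      have hsub : (x - y) ≫ v = 0 := by
        rw [Preadditive.sub_comp, hxy', sub_self]
      exact sub_eq_zero.1 (hkerV n (x - y) hsub)
    · intro n y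
      exact hsurj₁ n y
    · intro n x
      constructor
      · intro hx
        obtain ⟨g, hg⟩ : ∃ g : P⟦n⟧ ⟶ V, x = g ≫ v := Triangle.coyoneda_exact₂ _ hT₁ x hx
        try dsimp at hg
        exact ⟨g, hg.symm⟩
      · rintro ⟨g, rfl⟩
        show (g ≫ v) ≫ q = 0
        rw [Category.assoc, ht12, comp_zero]
  obtain ⟨s, hs⟩ := exists_section (piGHom P q) hseV.epi hprojZ
  obtain ⟨r₁, hr₁, -⟩ := exists_retraction hseV hs
  obtain ⟨rt, hrt⟩ := hreal₁ V r₁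
  haveI hiso : IsIso (v ≫ rt) := by
    apply pi_iso P hgen
    · intro n x hx
      have h5 : x ≫ (v ≫ rt) = x := by
        rw [← Category.assoc, hrt n (x ≫ v)]
        exact congrArg (fun g : GHom _ _ => g.app n x) hr₁
      rw [← h5, hx]
    · intro n y
      refine ⟨y, ?_⟩
      rw [← Category.assoc, hrt n (y ≫ v)]
      exact congrArg (fun g : GHom _ _ => g.app n y) hr₁
  have hδ : δ = 0 := by
    have h6 : δ ≫ (v ≫ rt)⟦(1 : ℤ)⟧' = 0 := by
      rw [Functor.map_comp, ← Category.assoc, ht31, Limits.zero_comp]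
    exact (cancel_mono ((v ≫ rt)⟦(1 : ℤ)⟧')).1 (by rw [h6, Limits.zero_comp])
  have hq_h : q ≫ h = 0 := by
    apply hfaith₁ Y
    intro n x
    rw [← Category.assoc]
    exact hpih n (x ≫ q)
  obtain ⟨ψ, hψ⟩ : ∃ ψ : V⟦(1 : ℤ)⟧ ⟶ Y, h = δ ≫ ψ := Triangle.yoneda_exact₃ _ hT₁ h hq_h
  try dsimp at hψ
  rw [hh, hψ, hδ, Limits.zero_comp, Limits.comp_zero]

end Franke
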